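/- For n ≥ 2, the map v ↦ u where u = (n, n+1, v(1), v(2), …, v(n−1)) is a bijection from up-down alternating permutations of S_{n−1} to the set of up-down alternating permutations u ∈ S_{n+1} with u(1) = n, and the number of big returns satisfies ret₁(u) = 1 + ret₁(v). -/

import Mathlib

/-- `u` is an up-down alternating permutation: `u(1) < u(2) > u(3) < ⋯`. -/
def IsUpDownAlt {n : ℕ} (u : Equiv.Perm (Fin n)) : Prop :=
  ∀ (i : ℕ) (h : i + 1 < n),
    (i % 2 = 0 → u ⟨i, Nat.lt_of_succ_lt h⟩ < u ⟨i + 1, h⟩) ∧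
    (i % 2 = 1 → u ⟨i + 1, h⟩ < u ⟨i, Nat.lt_of_succ_lt h⟩)

/-- The set of big returns of `w`: (0-indexed) values `j` with `w⁻¹(j) > w⁻¹(j+1) + 1`. -/
def bigRetSet {n : ℕ} (w : Equiv.Perm (Fin n)) : Set ℕ :=
  {j | ∃ h : j + 1 < n, (w⁻¹ ⟨j + 1, h⟩).val + 1 < (w⁻¹ ⟨j, Nat.lt_of_succ_lt h⟩).val}

/-- for `n ≥ 2`, the map `v ↦ u = (n, n+1, v(1), …, v(n-1))` is a bijection
from up-down alternating permutations of `S_{n-1}` onto the up-down alternating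
permutations `u ∈ S_{n+1}` with `u(1) = n`, and `ret₁(u) = 1 + ret₁(v)`.
(Values here are 0-indexed: `u(1) = n` becomes `(u 0).val = n - 1`, `u(2) = n + 1`
becomes `(u 1).val = n`, and the values of `v` are unchanged.) -/

def FmapFun (m : ℕ) (v : Equiv.Perm (Fin (m + 1))) : Fin (m + 3) → Fin (m + 3) := fun k =>
  if k.val = 0 then ⟨m + 1, by omega⟩
  else if k.val = 1 then ⟨m + 2, by omega⟩
  else ⟨(v ⟨k.val - 2, by have := k.isLt; omega⟩).val, by
    have := (v ⟨k.val - 2, by have := k.isLt; omega⟩).isLt; omega⟩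

lemma FmapFun_zero (m : ℕ) (v : Equiv.Perm (Fin (m + 1))) (h : (0:ℕ) < m + 3) :
    (FmapFun m v ⟨0, h⟩).val = m + 1 := rfl

lemma FmapFun_one (m : ℕ) (v : Equiv.Perm (Fin (m + 1))) (h : (1:ℕ) < m + 3) :
    (FmapFun m v ⟨1, h⟩).val = m + 2 := rfl

lemma FmapFun_add_two (m : ℕ) (v : Equiv.Perm (Fin (m + 1))) (i : ℕ) (h : i + 2 < m + 3) :
    (FmapFun m v ⟨i + 2, h⟩).val = (v ⟨i, by omega⟩).val := rfl

lemma FmapFun_injective (m : ℕ) (v : Equiv.Perm (Fin (m + 1))) :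
    Function.Injective (FmapFun m v) := by
  rintro ⟨av, ha⟩ ⟨bv, hb⟩ hab
  have hab' : (FmapFun m v ⟨av, ha⟩).val = (FmapFun m v ⟨bv, hb⟩).val := congrArg Fin.val hab
  apply Fin.ext
  simp only
  rcases av with _ | _ | av <;> rcases bv with _ | _ | bv
  · rfl
  · replace hab' : m + 1 = m + 2 := hab'
    omega
  · replace hab' : m + 1 = (v ⟨bv, by omega⟩).val := hab'
    have := (v ⟨bv, by omega⟩).isLt
    omega
  · replace hab' : m + 2 = m + 1 := hab'
    omega
  · rfl
  · replace hab' : m + 2 = (v ⟨bv, by omega⟩).val := hab'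
    have := (v ⟨bv, by omega⟩).isLt
    omega
  · replace hab' : (v ⟨av, by omega⟩).val = m + 1 := hab'
    have := (v ⟨av, by omega⟩).isLt
    omega
  · replace hab' : (v ⟨av, by omega⟩).val = m + 2 := hab'
    have := (v ⟨av, by omega⟩).isLt
    omega
  · replace hab' : (v ⟨av, by omega⟩).val = (v ⟨bv, by omega⟩).val := hab'
    have hvv : v ⟨av, by omega⟩ = v ⟨bv, by omega⟩ := Fin.ext hab'
    have h3 := congrArg Fin.val (v.injective hvv)
    simp only at h3
    omega

noncomputable def Fmap (m : ℕ) (v : Equiv.Perm (Fin (m + 1))) : Equiv.Perm (Fin (m + 3)) :=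
  Equiv.ofBijective (FmapFun m v)
    (Finite.injective_iff_bijective.mp (FmapFun_injective m v))

lemma Fmap_apply (m : ℕ) (v : Equiv.Perm (Fin (m + 1))) (k : Fin (m + 3)) :
    Fmap m v k = FmapFun m v k := rfl

lemma Fmap_inv_small (m : ℕ) (v : Equiv.Perm (Fin (m + 1))) (j : ℕ) (hj : j < m + 1)
    (h : j < m + 3) :
    ((Fmap m v)⁻¹ ⟨j, h⟩).val = (v⁻¹ ⟨j, hj⟩).val + 2 := by
  have key : (Fmap m v) ⟨(v⁻¹ ⟨j, hj⟩).val + 2, by have := (v⁻¹ ⟨j, hj⟩).isLt; omega⟩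
      = ⟨j, h⟩ := by
    apply Fin.ext
    have e : (FmapFun m v ⟨(v⁻¹ ⟨j, hj⟩).val + 2, by have := (v⁻¹ ⟨j, hj⟩).isLt; omega⟩).val
        = (v ⟨(v⁻¹ ⟨j, hj⟩).val, (v⁻¹ ⟨j, hj⟩).isLt⟩).val := rfl
    rw [Fmap_apply, e, Fin.eta, (show ∀ (σ : Equiv.Perm (Fin (m + 1))) x, σ (σ⁻¹ x) = x from fun σ x => σ.apply_symm_apply x)]
  have := congrArg (fun x => (((Fmap m v)⁻¹) x).val) key
  simp only [(show ∀ (σ : Equiv.Perm (Fin (m + 3))) x, σ⁻¹ (σ x) = x from fun σ x => σ.symm_apply_apply x)] at this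
  exact this.symm

lemma Fmap_inv_top1 (m : ℕ) (v : Equiv.Perm (Fin (m + 1))) (h : m + 1 < m + 3) :
    ((Fmap m v)⁻¹ ⟨m + 1, h⟩).val = 0 := by
  have key : (Fmap m v) ⟨0, by omega⟩ = ⟨m + 1, h⟩ := Fin.ext rfl
  have := congrArg (fun x => (((Fmap m v)⁻¹) x).val) key
  simp only [(show ∀ (σ : Equiv.Perm (Fin (m + 3))) x, σ⁻¹ (σ x) = x from fun σ x => σ.symm_apply_apply x)] at this
  exact this.symm

lemma Fmap_inv_top2 (m : ℕ) (v : Equiv.Perm (Fin (m + 1))) (h : m + 2 < m + 3) :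
    ((Fmap m v)⁻¹ ⟨m + 2, h⟩).val = 1 := by
  have key : (Fmap m v) ⟨1, by omega⟩ = ⟨m + 2, h⟩ := Fin.ext rfl
  have := congrArg (fun x => (((Fmap m v)⁻¹) x).val) key
  simp only [(show ∀ (σ : Equiv.Perm (Fin (m + 3))) x, σ⁻¹ (σ x) = x from fun σ x => σ.symm_apply_apply x)] at this
  exact this.symm

lemma Fmap_alt (m : ℕ) (v : Equiv.Perm (Fin (m + 1))) (hv : IsUpDownAlt v) :
    IsUpDownAlt (Fmap m v) := by
  intro i h
  match i with
  | 0 =>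
    refine ⟨fun _ => ?_, fun h1 => by omega⟩
    rw [Fin.lt_def]
    show (FmapFun m v ⟨0, by omega⟩).val < (FmapFun m v ⟨1, by omega⟩).val
    rw [FmapFun_zero, FmapFun_one]
    omega
  | 1 =>
    refine ⟨fun h0 => by omega, fun _ => ?_⟩
    rw [Fin.lt_def]
    show (FmapFun m v ⟨2, by omega⟩).val < (FmapFun m v ⟨1, by omega⟩).val
    rw [FmapFun_one]
    have e : (FmapFun m v ⟨2, h⟩).val = (v ⟨0, by omega⟩).val := rfl
    rw [e]
    have := (v ⟨0, by omega⟩).isLt; omega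
  | (i + 2) =>
    have hi : i + 1 < m + 1 := by omega
    have hv' := hv i hi
    have e1 : (Fmap m v ⟨i + 2, Nat.lt_of_succ_lt h⟩).val = (v ⟨i, by omega⟩).val := rfl
    have e2 : (Fmap m v ⟨i + 2 + 1, h⟩).val = (v ⟨i + 1, hi⟩).val := rfl
    have hval : (v ⟨i, by omega⟩ : Fin (m+1)) = v ⟨i, Nat.lt_of_succ_lt hi⟩ := rfl
    constructor
    · intro hp
      have hlt := hv'.1 (by omega)
      rw [Fin.lt_def] at hlt ⊢
      rw [e1, e2]
      exact hlt
    · intro hp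
      have hlt := hv'.2 (by omega)
      rw [Fin.lt_def] at hlt ⊢
      rw [e1, e2]
      exact hlt

lemma Fmap_bigRet (m : ℕ) (v : Equiv.Perm (Fin (m + 1))) :
    bigRetSet (Fmap m v) = insert m (bigRetSet v) := by
  ext j
  simp only [bigRetSet, Set.mem_setOf_eq, Set.mem_insert_iff]
  constructor
  · rintro ⟨h, hlt⟩
    rcases Nat.lt_or_ge j m with hj | hj
    · right
      refine ⟨by omega, ?_⟩
      rw [Fmap_inv_small m v (j+1) (by omega), Fmap_inv_small m v j (by omega)] at hlt
      omega
    · left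
      by_contra hne
      have hj' : j = m + 1 ∨ j = m + 2 := by omega
      rcases hj' with rfl | rfl
      · rw [show (⟨m+1+1, h⟩ : Fin (m+3)) = ⟨m+2, h⟩ from rfl] at hlt
        rw [Fmap_inv_top2, Fmap_inv_top1] at hlt
        omega
      · omega
  · rintro (hjm | ⟨h, hlt⟩)
    case inl =>
      rw [hjm]
      refine ⟨by omega, ?_⟩
      rw [Fmap_inv_top1 m v, Fmap_inv_small m v m (by omega)]
      omega
    · refine ⟨by omega, ?_⟩
      rw [Fmap_inv_small m v (j+1) (by omega), Fmap_inv_small m v j (by omega)]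
      omega

lemma Fmap_ncard (m : ℕ) (v : Equiv.Perm (Fin (m + 1))) :
    (bigRetSet (Fmap m v)).ncard = 1 + (bigRetSet v).ncard := by
  rw [Fmap_bigRet]
  have hsub : bigRetSet v ⊆ Set.Iio m := by
    rintro j ⟨hj, -⟩
    exact Set.mem_Iio.mpr (by omega)
  have hfin : (bigRetSet v).Finite := (Set.finite_Iio m).subset hsub
  have hnm : m ∉ bigRetSet v := by
    rintro ⟨hj, -⟩
    omega
  rw [Set.ncard_insert_of_notMem hnm hfin]
  omega

lemma Fmap_surj (m : ℕ) (u : Equiv.Perm (Fin (m + 3))) (hu : IsUpDownAlt u)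
    (h0 : (u ⟨0, by omega⟩).val = m + 1) :
    ∃ v : Equiv.Perm (Fin (m + 1)), IsUpDownAlt v ∧ Fmap m v = u := by
  have h1 : (u ⟨1, by omega⟩).val = m + 2 := by
    have hlt := (hu 0 (by omega)).1 rfl
    rw [Fin.lt_def] at hlt
    replace hlt : (u ⟨0, by omega⟩).val < (u ⟨1, by omega⟩).val := hlt
    have := (u ⟨1, by omega⟩).isLt
    omega
  have hsmall : ∀ i, (hi : i + 2 < m + 3) → (u ⟨i + 2, hi⟩).val < m + 1 := by
    intro i hi
    by_contra hge
    have hval := (u ⟨i + 2, hi⟩).isLt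
    have : u ⟨i + 2, hi⟩ = u ⟨0, by omega⟩ ∨ u ⟨i + 2, hi⟩ = u ⟨1, by omega⟩ := by
      rcases (by omega : (u ⟨i + 2, hi⟩).val = m + 1 ∨ (u ⟨i + 2, hi⟩).val = m + 2) with h | h
      · exact Or.inl (Fin.ext (by omega))
      · exact Or.inr (Fin.ext (by omega))
    rcases this with h | h
    · have := congrArg Fin.val (u.injective h); simp only at this; omega
    · have := congrArg Fin.val (u.injective h); simp only at this; omega
  have ginj : Function.Injective (fun i : Fin (m + 1) =>
      (⟨(u ⟨i.val + 2, by have := i.isLt; omega⟩).val,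
        hsmall i.val (by have := i.isLt; omega)⟩ : Fin (m + 1))) := by
    intro a b hab
    have h1'' := congrArg Fin.val hab
    replace h1'' : (u ⟨a.val + 2, by have := a.isLt; omega⟩).val
        = (u ⟨b.val + 2, by have := b.isLt; omega⟩).val := h1''
    have h' := congrArg Fin.val (u.injective (Fin.ext h1''))
    simp only at h'
    exact Fin.ext (by omega)
  let v : Equiv.Perm (Fin (m + 1)) :=
    Equiv.ofBijective _ (Finite.injective_iff_bijective.mp ginj)
  have hv_apply : ∀ i : Fin (m + 1),
      (v i).val = (u ⟨i.val + 2, by have := i.isLt; omega⟩).val := fun i => rfl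
  refine ⟨v, ?_, ?_⟩
  · intro i hi
    have hu' := hu (i + 2) (by omega)
    constructor
    · intro hp
      have hlt := hu'.1 (by omega)
      rw [Fin.lt_def] at hlt ⊢
      rw [hv_apply ⟨i, Nat.lt_of_succ_lt hi⟩, hv_apply ⟨i + 1, hi⟩]
      exact hlt
    · intro hp
      have hlt := hu'.2 (by omega)
      rw [Fin.lt_def] at hlt ⊢
      rw [hv_apply ⟨i, Nat.lt_of_succ_lt hi⟩, hv_apply ⟨i + 1, hi⟩]
      exact hlt
  · apply Equiv.ext
    rintro ⟨kv, hk⟩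
    apply Fin.ext
    rcases kv with _ | _ | kv
    · show ((m : ℕ) + 1) = (u ⟨0, hk⟩).val
      have : (u ⟨0, hk⟩).val = (u ⟨0, by omega⟩).val := rfl
      omega
    · show ((m : ℕ) + 2) = (u ⟨1, hk⟩).val
      have : (u ⟨1, hk⟩).val = (u ⟨1, by omega⟩).val := rfl
      omega
    · show (v ⟨kv, by omega⟩).val = (u ⟨kv + 2, hk⟩).val
      rw [hv_apply ⟨kv, by omega⟩]

theorem updown_first_n_bijection (n : ℕ) (hn : 2 ≤ n) :
    ∃ Φ : {v : Equiv.Perm (Fin (n - 1)) // IsUpDownAlt v} ≃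
          {u : Equiv.Perm (Fin (n + 1)) //
            IsUpDownAlt u ∧ ((u : Equiv.Perm (Fin (n + 1))) ⟨0, n.succ_pos⟩).val = n - 1},
      ∀ v,
        ((Φ v : Equiv.Perm (Fin (n + 1))) ⟨0, n.succ_pos⟩).val = n - 1 ∧
        ((Φ v : Equiv.Perm (Fin (n + 1))) ⟨1, by omega⟩).val = n ∧
        (∀ i : Fin (n - 1),
          ((Φ v : Equiv.Perm (Fin (n + 1)))
              ⟨i.val + 2, by have := i.isLt; omega⟩).val =
            ((v : Equiv.Perm (Fin (n - 1))) i).val) ∧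
        (bigRetSet (Φ v : Equiv.Perm (Fin (n + 1)))).ncard =
          1 + (bigRetSet (v : Equiv.Perm (Fin (n - 1)))).ncard := by
  obtain ⟨m, rfl⟩ : ∃ m, n = m + 2 := ⟨n - 2, by omega⟩
  have hsub : ∀ v : {v : Equiv.Perm (Fin (m + 1)) // IsUpDownAlt v},
      IsUpDownAlt (Fmap m v.1) ∧ ((Fmap m v.1) ⟨0, by omega⟩).val = m + 1 :=
    fun v => ⟨Fmap_alt m v.1 v.2, rfl⟩
  let F' : {v : Equiv.Perm (Fin (m + 1)) // IsUpDownAlt v} →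
      {u : Equiv.Perm (Fin (m + 3)) //
        IsUpDownAlt u ∧ (u ⟨0, by omega⟩).val = m + 1} :=
    fun v => ⟨Fmap m v.1, hsub v⟩
  have hFinj : Function.Injective F' := by
    intro a b hab
    have h1 : Fmap m a.1 = Fmap m b.1 := congrArg Subtype.val hab
    apply Subtype.ext
    apply Equiv.ext
    intro i
    apply Fin.ext
    have e1 : (Fmap m a.1 ⟨i.val + 2, by have := i.isLt; omega⟩).val
        = (a.1 i).val := by
      have : (Fmap m a.1 ⟨i.val + 2, by have := i.isLt; omega⟩).val
          = (a.1 ⟨i.val, i.isLt⟩).val := rfl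
      rw [this, Fin.eta]
    have e2 : (Fmap m b.1 ⟨i.val + 2, by have := i.isLt; omega⟩).val
        = (b.1 i).val := by
      have : (Fmap m b.1 ⟨i.val + 2, by have := i.isLt; omega⟩).val
          = (b.1 ⟨i.val, i.isLt⟩).val := rfl
      rw [this, Fin.eta]
    rw [← e1, ← e2, h1]
  have hFsurj : Function.Surjective F' := by
    rintro ⟨u, hu, h0⟩
    obtain ⟨v, hv, hvu⟩ := Fmap_surj m u hu h0
    exact ⟨⟨v, hv⟩, Subtype.ext hvu⟩
  refine ⟨Equiv.ofBijective F' ⟨hFinj, hFsurj⟩, fun v => ⟨rfl, rfl, fun i => ?_, ?_⟩⟩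
  · show (Fmap m v.1 ⟨i.val + 2, by have := i.isLt; omega⟩).val = (v.1 i).val
    have : (Fmap m v.1 ⟨i.val + 2, by have := i.isLt; omega⟩).val
        = (v.1 ⟨i.val, i.isLt⟩).val := rfl
    rw [this, Fin.eta]
  · exact Fmap_ncard m v.1
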